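/- Let P be a path graph on vertices v_0, ..., v_{m-1} colored with n colors so that every pair of distinct colors appears on some edge of the path. If the endpoints v_0 and v_{m-1} have different colors a and b, then each of the color classes a and b contains at least ⌈n/2⌉ vertices. -/

import Mathlib

open Finset in
lemma stmt7_aux_left (n m : ℕ) (hm : 1 ≤ m) (s : ℕ → Fin n)
    (hcov : ∀ c : Fin n, c ≠ s 0 → ∃ i : ℕ, i + 1 < m ∧
      ((s i = s 0 ∧ s (i + 1) = c) ∨ (s i = c ∧ s (i + 1) = s 0))) :
    n ≤ 2 * ((Finset.range m).filter (fun i => s i = s 0)).card := by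
  classical
  set a := s 0 with ha
  set A := (Finset.range m).filter (fun i => s i = a) with hA
  have h0 : (0 : ℕ) ∈ A := by simp [hA, Finset.mem_filter]; omega
  choose! F hF using hcov
  set φ : Fin n → ℕ × Bool := fun c => if s (F c) = a then (F c, true) else (F c + 1, false)
    with hφ
  have hcard : ((Finset.univ.erase a : Finset (Fin n))).card ≤
      ((A ×ˢ (Finset.univ : Finset Bool)).erase ((0 : ℕ), false)).card := by
    apply Finset.card_le_card_of_injOn φ
    · intro c hc
      have hc' : c ≠ a := (Finset.mem_erase.mp hc).1
      obtain ⟨hlt, hor⟩ := hF c hc'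
      rw [Finset.mem_coe, Finset.mem_erase]
      by_cases h : s (F c) = a
      · constructor
        · simp [hφ, h]
        · simp only [hφ, if_pos h, Finset.mem_product, Finset.mem_univ, and_true]
          simp [hA, Finset.mem_filter, h]; omega
      · constructor
        · simp [hφ, h]
        · simp only [hφ, if_neg h, Finset.mem_product, Finset.mem_univ, and_true]
          have hb : s (F c + 1) = a := by
            rcases hor with ⟨h1, _⟩ | ⟨_, h2⟩
            · exact absurd h1 h
            · exact h2
          simp [hA, Finset.mem_filter, hb]; omega
    · intro c hc c' hc' heq
      have hc1 : c ≠ a := (Finset.mem_erase.mp hc).1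
      have hc1' : c' ≠ a := (Finset.mem_erase.mp hc').1
      obtain ⟨_, hor⟩ := hF c hc1
      obtain ⟨_, hor'⟩ := hF c' hc1'
      simp only [hφ] at heq
      by_cases h : s (F c) = a
      · by_cases h' : s (F c') = a
        · rw [if_pos h, if_pos h', Prod.mk.injEq] at heq
          obtain ⟨hFc, -⟩ := heq
          have e1 : c = s (F c + 1) := by
            rcases hor with ⟨_, h2⟩ | ⟨h1, _⟩
            · exact h2.symm
            · exact absurd (h1.symm.trans h) hc1
          have e2 : c' = s (F c' + 1) := by
            rcases hor' with ⟨_, h2⟩ | ⟨h1, _⟩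
            · exact h2.symm
            · exact absurd (h1.symm.trans h') hc1'
          rw [e1, e2, hFc]
        · rw [if_pos h, if_neg h'] at heq
          simp at heq
      · by_cases h' : s (F c') = a
        · rw [if_neg h, if_pos h'] at heq
          simp at heq
        · rw [if_neg h, if_neg h', Prod.mk.injEq] at heq
          obtain ⟨hFc, -⟩ := heq
          have hFc : F c = F c' := by omega
          have e1 : c = s (F c) := by
            rcases hor with ⟨h1, _⟩ | ⟨h1, _⟩
            · exact absurd h1 h
            · exact h1.symm
          have e2 : c' = s (F c') := by
            rcases hor' with ⟨h1, _⟩ | ⟨h1, _⟩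
            · exact absurd h1 h'
            · exact h1.symm
          rw [e1, e2, hFc]
  have hmem : ((0 : ℕ), false) ∈ A ×ˢ (Finset.univ : Finset Bool) := by
    simp [Finset.mem_product, h0]
  rw [Finset.card_erase_of_mem (Finset.mem_univ a),
      Finset.card_erase_of_mem hmem, Finset.card_univ, Fintype.card_fin,
      Finset.card_product, Finset.card_univ] at hcard
  have hApos : 1 ≤ A.card := Finset.card_pos.mpr ⟨0, h0⟩
  simp only [Fintype.card_bool] at hcard
  omega

open Finset in
lemma stmt7_aux_right (n m : ℕ) (hm : 1 ≤ m) (s : ℕ → Fin n)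
    (hcov : ∀ c : Fin n, c ≠ s (m - 1) → ∃ i : ℕ, i + 1 < m ∧
      ((s i = s (m - 1) ∧ s (i + 1) = c) ∨ (s i = c ∧ s (i + 1) = s (m - 1)))) :
    n ≤ 2 * ((Finset.range m).filter (fun i => s i = s (m - 1))).card := by
  classical
  set b := s (m - 1) with hb
  set A := (Finset.range m).filter (fun i => s i = b) with hA
  have h0 : (m - 1 : ℕ) ∈ A := by simp [hA, Finset.mem_filter]; omega
  choose! F hF using hcov
  set φ : Fin n → ℕ × Bool := fun c => if s (F c + 1) = b then (F c + 1, true) else (F c, false)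
    with hφ
  have hcard : ((Finset.univ.erase b : Finset (Fin n))).card ≤
      ((A ×ˢ (Finset.univ : Finset Bool)).erase ((m - 1 : ℕ), false)).card := by
    apply Finset.card_le_card_of_injOn φ
    · intro c hc
      have hc' : c ≠ b := (Finset.mem_erase.mp hc).1
      obtain ⟨hlt, hor⟩ := hF c hc'
      rw [Finset.mem_coe, Finset.mem_erase]
      by_cases h : s (F c + 1) = b
      · constructor
        · simp [hφ, h]
        · simp only [hφ, if_pos h, Finset.mem_product, Finset.mem_univ, and_true]
          simp [hA, Finset.mem_filter, h]; omega
      · constructor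
        · simp only [hφ, if_neg h, ne_eq, Prod.mk.injEq, not_and]
          intro hFc; omega
        · simp only [hφ, if_neg h, Finset.mem_product, Finset.mem_univ, and_true]
          have hbv : s (F c) = b := by
            rcases hor with ⟨h1, _⟩ | ⟨_, h2⟩
            · exact h1
            · exact absurd h2 h
          simp [hA, Finset.mem_filter, hbv]; omega
    · intro c hc c' hc' heq
      have hc1 : c ≠ b := (Finset.mem_erase.mp hc).1
      have hc1' : c' ≠ b := (Finset.mem_erase.mp hc').1
      obtain ⟨hlt, hor⟩ := hF c hc1
      obtain ⟨hlt', hor'⟩ := hF c' hc1'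
      simp only [hφ] at heq
      by_cases h : s (F c + 1) = b
      · by_cases h' : s (F c' + 1) = b
        · rw [if_pos h, if_pos h', Prod.mk.injEq] at heq
          obtain ⟨hFc, -⟩ := heq
          have hFc : F c = F c' := by omega
          have e1 : c = s (F c) := by
            rcases hor with ⟨_, h2⟩ | ⟨h1, _⟩
            · exact absurd (h2.symm.trans h) hc1
            · exact h1.symm
          have e2 : c' = s (F c') := by
            rcases hor' with ⟨_, h2⟩ | ⟨h1, _⟩
            · exact absurd (h2.symm.trans h') hc1'
            · exact h1.symm
          rw [e1, e2, hFc]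
        · rw [if_pos h, if_neg h'] at heq
          simp at heq
      · by_cases h' : s (F c' + 1) = b
        · rw [if_neg h, if_pos h'] at heq
          simp at heq
        · rw [if_neg h, if_neg h', Prod.mk.injEq] at heq
          obtain ⟨hFc, -⟩ := heq
          have e1 : c = s (F c + 1) := by
            rcases hor with ⟨_, h2⟩ | ⟨_, h2⟩
            · exact h2.symm
            · exact absurd h2 h
          have e2 : c' = s (F c' + 1) := by
            rcases hor' with ⟨_, h2⟩ | ⟨_, h2⟩
            · exact h2.symm
            · exact absurd h2 h'
          rw [e1, e2, hFc]
  have hmem : ((m - 1 : ℕ), false) ∈ A ×ˢ (Finset.univ : Finset Bool) := by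
    simp [Finset.mem_product, h0]
  rw [Finset.card_erase_of_mem (Finset.mem_univ b),
      Finset.card_erase_of_mem hmem, Finset.card_univ, Fintype.card_fin,
      Finset.card_product, Finset.card_univ] at hcard
  have hApos : 1 ≤ A.card := Finset.card_pos.mpr ⟨m - 1, h0⟩
  simp only [Fintype.card_bool] at hcard
  omega

/-- If a path on `m` vertices colored with `n` colors covers every pair of distinct
colors on some edge, and the endpoints have different colors `a` and `b`, then each of
the two endpoint color classes has at least `⌈n/2⌉` vertices. -/
theorem stmt_7 (n m : ℕ) (hn : 2 ≤ n) (hm : 1 ≤ m) (s : ℕ → Fin n)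
    (hcov : ∀ a b : Fin n, a ≠ b → ∃ i : ℕ, i + 1 < m ∧
      ((s i = a ∧ s (i + 1) = b) ∨ (s i = b ∧ s (i + 1) = a)))
    (hend : s 0 ≠ s (m - 1)) :
    (n + 1) / 2 ≤ ({i : ℕ | i < m ∧ s i = s 0}).ncard ∧
    (n + 1) / 2 ≤ ({i : ℕ | i < m ∧ s i = s (m - 1)}).ncard := by
  classical
  have hL := stmt7_aux_left n m hm s (fun c hc => by
    obtain ⟨i, hi, hor⟩ := hcov (s 0) c (Ne.symm hc)
    exact ⟨i, hi, hor⟩)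
  have hR := stmt7_aux_right n m hm s (fun c hc => by
    obtain ⟨i, hi, hor⟩ := hcov (s (m - 1)) c (Ne.symm hc)
    exact ⟨i, hi, hor⟩)
  have e1 : {i : ℕ | i < m ∧ s i = s 0} =
      ↑((Finset.range m).filter (fun i => s i = s 0)) := by
    ext i; simp [Finset.mem_filter]
  have e2 : {i : ℕ | i < m ∧ s i = s (m - 1)} =
      ↑((Finset.range m).filter (fun i => s i = s (m - 1))) := by
    ext i; simp [Finset.mem_filter]
  rw [e1, e2, Set.ncard_coe_finset, Set.ncard_coe_finset]
  omega
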